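/- Let s : (l, r) → ℝ be given by s(x) = ∫_c^x exp(∫_c^y β(z) dz) dy where β² is locally integrable on (l,r). Then the inverse function q = s⁻¹ defined on s((l,r)) is continuously differentiable with q'(u) = 1/s'(q(u)) > 0, q' is locally absolutely continuous, and Lebesgue-almost everywhere q''(u) = -β(q(u))·(q'(u))². -/

import Mathlib

open MeasureTheory Set Filter Topology


/-- `exp` is Lipschitz on `Iic B` with constant `exp B`. -/
lemma exp_lip {s t B : ℝ} (hs : s ≤ B) (ht : t ≤ B) :
    |Real.exp s - Real.exp t| ≤ Real.exp B * |s - t| := by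
  wlog h : t ≤ s generalizing s t
  · have := this ht hs (le_of_not_ge h)
    rwa [abs_sub_comm (Real.exp t), abs_sub_comm t s] at this
  have h1 : Real.exp s - Real.exp t ≤ (s - t) * Real.exp s := by
    have h2 := Real.add_one_le_exp (t - s)
    have h3 : (t - s + 1) * Real.exp s ≤ Real.exp (t - s) * Real.exp s :=
      mul_le_mul_of_nonneg_right h2 (Real.exp_pos s).le
    rw [← Real.exp_add] at h3
    simp only [sub_add_cancel] at h3
    nlinarith
  have h4 : (s - t) * Real.exp s ≤ (s - t) * Real.exp B :=
    mul_le_mul_of_nonneg_left (Real.exp_le_exp.2 hs) (by linarith)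
  rw [abs_of_nonneg (sub_nonneg.2 (Real.exp_le_exp.2 h)), abs_of_nonneg (sub_nonneg.2 h)]
  nlinarith

/-- FTC identity for continuous integrands. -/
lemma key_cont (g : ℝ → ℝ) (hg : Continuous g) (a b : ℝ) :
    ∫ x in a..b, g x * Real.exp (-(∫ t in a..x, g t))
      = 1 - Real.exp (-(∫ t in a..b, g t)) := by
  set G := fun y => ∫ t in a..y, g t with hGdef
  have hG : ∀ x : ℝ, HasDerivAt G (g x) x := fun x =>
    intervalIntegral.integral_hasDerivAt_right (hg.intervalIntegrable a x)
      (hg.stronglyMeasurableAtFilter volume (𝓝 x)) hg.continuousAt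
  have hGc : Continuous G := intervalIntegral.continuous_primitive
    (fun a b => hg.intervalIntegrable a b) a
  have hφ : ∀ x : ℝ, HasDerivAt (fun y => -Real.exp (-G y)) (g x * Real.exp (-G x)) x := by
    intro x
    have h1 : HasDerivAt (fun y => -G y) (-g x) x := (hG x).neg
    have h2 := (Real.hasDerivAt_exp (-G x)).comp x h1
    have h3 := h2.neg
    have h4 : g x * Real.exp (-G x) = -(Real.exp (-G x) * -g x) := by ring
    rw [h4]
    exact h3
  have hint : IntervalIntegrable (fun x => g x * Real.exp (-G x)) volume a b :=
    (hg.mul (Real.continuous_exp.comp hGc.neg)).intervalIntegrable a b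
  have := intervalIntegral.integral_eq_sub_of_hasDerivAt (fun x _ => hφ x) hint
  rw [this]
  have hGa : G a = 0 := intervalIntegral.integral_same
  simp only [hGa, neg_zero, Real.exp_zero]
  show -Real.exp (-G b) - -1 = 1 - Real.exp (-G b)
  ring

lemma prim_bound {f : ℝ → ℝ} (hf : Integrable f volume) (a x : ℝ) :
    |∫ t in a..x, f t| ≤ ∫ t, |f t| := by
  calc |∫ t in a..x, f t| ≤ ∫ t in Set.uIoc a x, |f t| := by
        simpa [Real.norm_eq_abs] using
          intervalIntegral.norm_integral_le_integral_norm_uIoc (f := f) (a := a) (b := x)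
    _ ≤ ∫ t, |f t| := by
        apply setIntegral_le_integral hf.abs
        filter_upwards with t using abs_nonneg _

/-- FTC identity for integrable integrands, via approximation by continuous functions. -/
lemma key (f : ℝ → ℝ) (hf : Integrable f volume) (a b : ℝ) (hab : a ≤ b) :
    ∫ x in a..b, f x * Real.exp (-(∫ t in a..x, f t))
      = 1 - Real.exp (-(∫ t in a..b, f t)) := by
  set F := fun y => ∫ t in a..y, f t with hFdef
  have hFc : Continuous F := hf.continuous_primitive a
  set M := ∫ t, |f t| with hMdef
  have hM0 : 0 ≤ M := integral_nonneg fun t => abs_nonneg _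
  have hFb : ∀ x, |F x| ≤ M := fun x => prim_bound hf a x
  have hfF : Integrable (fun x => f x * Real.exp (-F x)) volume := by
    have h0 : Integrable (fun x => Real.exp (-F x) * f x) volume := by
      apply Integrable.bdd_mul (c := Real.exp M) hf (Real.continuous_exp.comp hFc.neg).aestronglyMeasurable
      refine Filter.Eventually.of_forall (fun x => ?_)
      show ‖Real.exp (-F x)‖ ≤ Real.exp M
      rw [Real.norm_eq_abs, abs_of_pos (Real.exp_pos _)]
      exact Real.exp_le_exp.2 (by have := hFb x; rw [abs_le] at this; linarith)
    simpa [mul_comm] using h0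
  have hest : ∀ ε : ℝ, 0 < ε → ε ≤ 1 →
      |(∫ x in a..b, f x * Real.exp (-F x)) - (1 - Real.exp (-F b))|
        ≤ Real.exp (M + 1) * (2 + M) * ε := by
    intro ε hε hε1
    obtain ⟨g, -, hgδ, hgc, hgi⟩ := hf.exists_hasCompactSupport_integral_sub_le hε
    simp only [Real.norm_eq_abs] at hgδ
    set G := fun y => ∫ t in a..y, g t with hGdef
    have hGc : Continuous G := hgi.continuous_primitive a
    have hFG : ∀ x, |F x - G x| ≤ ε := by
      intro x
      have h1 : F x - G x = ∫ t in a..x, (f t - g t) :=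
        (intervalIntegral.integral_sub (hf.intervalIntegrable)
          (hgi.intervalIntegrable)).symm
      rw [h1]
      exact (prim_bound (hf.sub hgi) a x).trans hgδ
    have hGb : ∀ x, |G x| ≤ M + 1 := by
      intro x
      have h1 := hFb x
      have h2 := hFG x
      have h3 : |G x| - |F x| ≤ |G x - F x| := abs_sub_abs_le_abs_sub _ _
      rw [abs_sub_comm] at h3
      linarith
    set E := Real.exp (M + 1) with hEdef
    have hE0 : 0 < E := Real.exp_pos _
    have hexpG : ∀ x, Real.exp (-G x) ≤ E := by
      intro x
      exact Real.exp_le_exp.2 ((neg_le_abs _).trans ((abs_neg (G x) ▸ rfl : |(-G x)| = |G x|) ▸ hGb x))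
    have hexpd : ∀ x, |Real.exp (-F x) - Real.exp (-G x)| ≤ E * ε := by
      intro x
      have h1 : -F x ≤ M + 1 := by have := hFb x; rw [abs_le] at this; linarith
      have h2 : -G x ≤ M + 1 := by have := hGb x; rw [abs_le] at this; linarith
      have h3 := exp_lip h1 h2
      have h4 : |(-F x) - (-G x)| = |F x - G x| := by rw [← abs_neg]; ring_nf
      rw [h4] at h3
      exact h3.trans (mul_le_mul_of_nonneg_left (hFG x) hE0.le)
    have hkc := key_cont g hgc a b
    have hgF : IntervalIntegrable (fun x => g x * Real.exp (-G x)) volume a b :=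
      (hgc.mul (Real.continuous_exp.comp hGc.neg)).intervalIntegrable a b
    have hXeq : (∫ x in a..b, f x * Real.exp (-F x)) - (1 - Real.exp (-F b))
        = (∫ x in a..b, (f x * Real.exp (-F x) - g x * Real.exp (-G x)))
          + (Real.exp (-F b) - Real.exp (-G b)) := by
      rw [intervalIntegral.integral_sub (hfF.intervalIntegrable) hgF, hkc]
      ring
    have hptw : ∀ x ∈ Icc a b, |f x * Real.exp (-F x) - g x * Real.exp (-G x)|
        ≤ |f x - g x| * E + |f x| * (E * ε) := by
      intro x _
      have e1 : f x * Real.exp (-F x) - g x * Real.exp (-G x)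
          = f x * (Real.exp (-F x) - Real.exp (-G x)) + (f x - g x) * Real.exp (-G x) := by ring
      rw [e1]
      refine (abs_add_le _ _).trans ?_
      rw [abs_mul, abs_mul]
      have b1 : |f x| * |Real.exp (-F x) - Real.exp (-G x)| ≤ |f x| * (E * ε) :=
        mul_le_mul_of_nonneg_left (hexpd x) (abs_nonneg _)
      have b2 : |f x - g x| * |Real.exp (-G x)| ≤ |f x - g x| * E := by
        rw [abs_of_pos (Real.exp_pos _)]
        exact mul_le_mul_of_nonneg_left (hexpG x) (abs_nonneg _)
      linarith
    have habs1 : IntervalIntegrable (fun x => |f x - g x|) volume a b := by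
      have h := (hf.sub hgi).abs.intervalIntegrable (μ := volume) (a := a) (b := b)
      simpa [Pi.sub_apply] using h
    have hdiffint : IntervalIntegrable
        (fun x => f x * Real.exp (-F x) - g x * Real.exp (-G x)) volume a b :=
      (hfF.intervalIntegrable).sub hgF
    have hrhsint : IntervalIntegrable
        (fun x => |f x - g x| * E + |f x| * (E * ε)) volume a b :=
      (habs1.mul_const E).add
        ((hf.abs.intervalIntegrable).mul_const (E * ε))
    have h5 : |∫ x in a..b, (f x * Real.exp (-F x) - g x * Real.exp (-G x))|
        ≤ ∫ x in a..b, (|f x - g x| * E + |f x| * (E * ε)) := by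
      refine (intervalIntegral.abs_integral_le_integral_abs hab).trans ?_
      exact intervalIntegral.integral_mono_on hab hdiffint.abs hrhsint hptw
    have hsplit : ∫ x in a..b, (|f x - g x| * E + |f x| * (E * ε))
        = (∫ x in a..b, |f x - g x|) * E + (∫ x in a..b, |f x|) * (E * ε) := by
      rw [intervalIntegral.integral_add (habs1.mul_const E)
        ((hf.abs.intervalIntegrable).mul_const (E * ε)),
        intervalIntegral.integral_mul_const, intervalIntegral.integral_mul_const]
    have hI1 : (∫ x in a..b, |f x - g x|) ≤ ε := by
      rw [intervalIntegral.integral_of_le hab]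
      refine (setIntegral_le_integral (hf.sub hgi).abs ?_).trans hgδ
      filter_upwards with t using abs_nonneg _
    have hI1' : 0 ≤ ∫ x in a..b, |f x - g x| := by
      rw [intervalIntegral.integral_of_le hab]
      exact setIntegral_nonneg measurableSet_Ioc fun t _ => abs_nonneg _
    have hI2 : (∫ x in a..b, |f x|) ≤ M := by
      rw [intervalIntegral.integral_of_le hab, hMdef]
      refine setIntegral_le_integral hf.abs ?_
      filter_upwards with t using abs_nonneg _
    have hI2' : 0 ≤ ∫ x in a..b, |f x| := by
      rw [intervalIntegral.integral_of_le hab]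
      exact setIntegral_nonneg measurableSet_Ioc fun t _ => abs_nonneg _
    calc |(∫ x in a..b, f x * Real.exp (-F x)) - (1 - Real.exp (-F b))|
        ≤ |∫ x in a..b, (f x * Real.exp (-F x) - g x * Real.exp (-G x))|
          + |Real.exp (-F b) - Real.exp (-G b)| := by rw [hXeq]; exact abs_add_le _ _
      _ ≤ ((∫ x in a..b, |f x - g x|) * E + (∫ x in a..b, |f x|) * (E * ε)) + E * ε := by
          have := hexpd b
          have h6 := h5
          rw [hsplit] at h6
          linarith
      _ ≤ (ε * E + M * (E * ε)) + E * ε := by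
          have c1 : (∫ x in a..b, |f x - g x|) * E ≤ ε * E :=
            mul_le_mul_of_nonneg_right hI1 hE0.le
          have c2 : (∫ x in a..b, |f x|) * (E * ε) ≤ M * (E * ε) :=
            mul_le_mul_of_nonneg_right hI2 (by positivity)
          linarith
      _ = E * (2 + M) * ε := by ring
  -- conclude equality
  have hX0 : (∫ x in a..b, f x * Real.exp (-F x)) - (1 - Real.exp (-F b)) = 0 := by
    by_contra hne
    set X := (∫ x in a..b, f x * Real.exp (-F x)) - (1 - Real.exp (-F b)) with hXdef
    have hXpos : 0 < |X| := abs_pos.2 hne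
    set K := Real.exp (M + 1) * (2 + M) with hKdef
    have hK0 : 0 < K := by positivity
    set ε := min 1 (|X| / (2 * K)) with hεdef
    have hε0 : 0 < ε := lt_min one_pos (by positivity)
    have hε1 : ε ≤ 1 := min_le_left _ _
    have h7 := hest ε hε0 hε1
    have h8 : K * ε ≤ K * (|X| / (2 * K)) :=
      mul_le_mul_of_nonneg_left (min_le_right _ _) hK0.le
    have h9 : K * (|X| / (2 * K)) = |X| / 2 := by field_simp
    have h10 : |X| ≤ K * ε := by
      calc |X| ≤ Real.exp (M + 1) * (2 + M) * ε := h7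
        _ = K * ε := by rw [hKdef]
    linarith
  linarith

lemma key2 (β : ℝ → ℝ) (a b : ℝ) (hab : a ≤ b)
    (hint : IntegrableOn β (Ioc a b) volume) :
    ∫ x in a..b, β x * Real.exp (-(∫ t in a..x, β t))
      = 1 - Real.exp (-(∫ t in a..b, β t)) := by
  set f := (Ioc a b).indicator β with hfdef
  have hfi : Integrable f volume := hint.integrable_indicator measurableSet_Ioc
  have hFeq : ∀ x ∈ Icc a b, (∫ t in a..x, f t) = ∫ t in a..x, β t := by
    intro x hx
    rw [intervalIntegral.integral_of_le hx.1, intervalIntegral.integral_of_le hx.1, hfdef,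
      setIntegral_indicator measurableSet_Ioc]
    congr 1
    rw [Ioc_inter_Ioc, max_self, min_eq_left hx.2]
  have hk := key f hfi a b hab
  rw [hFeq b ⟨hab, le_rfl⟩] at hk
  rw [← hk, intervalIntegral.integral_of_le hab, intervalIntegral.integral_of_le hab]
  apply setIntegral_congr_fun measurableSet_Ioc
  intro x hx
  simp only [hfdef, indicator_of_mem hx]
  rw [hFeq x (Ioc_subset_Icc_self hx)]

/-- FTC identity with general basepoint, set-integral form. -/
lemma key3 (β : ℝ → ℝ) (c a b : ℝ) (hab : a ≤ b)
    (hca : IntervalIntegrable β volume c a) (hab' : IntervalIntegrable β volume a b) :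
    ∫ x in Ioc a b, β x * Real.exp (-(∫ z in c..x, β z))
      = Real.exp (-(∫ z in c..a, β z)) - Real.exp (-(∫ z in c..b, β z)) := by
  have hax : ∀ x ∈ Icc a b, IntervalIntegrable β volume a x := by
    intro x hx
    exact hab'.mono_set (uIcc_subset_uIcc left_mem_uIcc
      ((uIcc_of_le hab).symm ▸ (Icc_subset_uIcc hx : x ∈ uIcc a b)))
  have hsplit : ∀ x ∈ Icc a b, (∫ z in c..x, β z)
      = (∫ z in c..a, β z) + ∫ z in a..x, β z := by
    intro x hx
    rw [intervalIntegral.integral_add_adjacent_intervals hca (hax x hx)]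
  have h1 : ∫ x in Ioc a b, β x * Real.exp (-(∫ z in c..x, β z))
      = ∫ x in Ioc a b, Real.exp (-(∫ z in c..a, β z))
          * (β x * Real.exp (-(∫ z in a..x, β z))) := by
    apply setIntegral_congr_fun measurableSet_Ioc
    intro x hx
    simp only []
    rw [hsplit x (Ioc_subset_Icc_self hx), neg_add, Real.exp_add]
    ring
  rw [h1, integral_const_mul, ← intervalIntegral.integral_of_le hab,
    key2 β a b hab ((intervalIntegrable_iff_integrableOn_Ioc_of_le hab).mp hab'),
    hsplit b ⟨hab, le_rfl⟩, neg_add, Real.exp_add]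
  ring

/-- For `s(x) = ∫_c^x exp(∫_c^y β(z) dz) dy` with `β²` locally integrable on
`(l,r)`, the inverse `q = s⁻¹` on `s((l,r))` is continuously differentiable with
`q'(u) = 1/s'(q(u)) > 0`, `q'` is locally absolutely continuous (encoded via the fundamental
theorem of calculus with an integrable a.e. derivative `q''`), and Lebesgue-a.e. on the image
`q''(u) = -β(q(u))·(q'(u))²`. -/
theorem stmt2 (l r c : ℝ) (hlr : l < r) (hc : c ∈ Ioo l r)
    (β : ℝ → ℝ) (hβ : Measurable β)
    (hloc : LocallyIntegrableOn (fun x => (β x) ^ 2) (Ioo l r) volume)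
    (s : ℝ → ℝ)
    (hs : ∀ x ∈ Ioo l r, s x = ∫ y in c..x, Real.exp (∫ z in c..y, β z))
    (q : ℝ → ℝ)
    (hq : ∀ x ∈ Ioo l r, q (s x) = x) :
    ∃ q' : ℝ → ℝ,
      ContinuousOn q' (s '' Ioo l r) ∧
      (∀ u ∈ s '' Ioo l r,
        HasDerivAt q (q' u) u ∧ 0 < q' u ∧
          q' u = 1 / Real.exp (∫ z in c..(q u), β z)) ∧
      ∃ q'' : ℝ → ℝ, Measurable q'' ∧
        (∀ u v : ℝ, u ∈ s '' Ioo l r → v ∈ s '' Ioo l r → u ≤ v →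
          (IntervalIntegrable q'' volume u v ∧ q' v - q' u = ∫ w in u..v, q'' w)) ∧
        (∀ᵐ u ∂(volume.restrict (s '' Ioo l r)),
          q'' u = - β (q u) * (q' u) ^ 2) := by
  obtain ⟨hlc, hcr⟩ := hc
  -- interval integrability of β between points of Ioo l r
  have hβint : ∀ a ∈ Ioo l r, ∀ b ∈ Ioo l r, IntervalIntegrable β volume a b := by
    intro a ha b hb
    rw [intervalIntegrable_iff]
    have hsub : uIcc a b ⊆ Ioo l r := by
      rw [uIcc]
      exact Icc_subset_Ioo (lt_min ha.1 hb.1) (max_lt ha.2 hb.2)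
    have h2 : IntegrableOn (fun x => (β x) ^ 2) (uIcc a b) volume :=
      hloc.integrableOn_compact_subset hsub isCompact_uIcc
    have h1 : IntegrableOn (fun x => 1 + (β x) ^ 2) (uIcc a b) volume :=
      (integrableOn_const (s := uIcc a b) measure_Icc_lt_top.ne).add h2
    have hβK : IntegrableOn β (uIcc a b) volume := by
      apply h1.mono' hβ.aestronglyMeasurable.restrict
      filter_upwards with x
      rw [Real.norm_eq_abs]
      nlinarith [sq_nonneg (|β x| - 1), sq_abs (β x), abs_nonneg (β x)]
    exact hβK.mono_set (by rw [uIoc, uIcc]; exact Ioc_subset_Icc_self)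
  set F : ℝ → ℝ := fun x => ∫ z in c..x, β z with hFdef
  set g : ℝ → ℝ := fun x => Real.exp (F x) with hgdef
  -- continuity of F on Ioo l r
  have hFcont : ∀ x ∈ Ioo l r, ContinuousAt F x := by
    intro x hx
    have hb₁ : l < (l + x) / 2 ∧ (l + x) / 2 < x := ⟨by linarith [hx.1], by linarith [hx.1]⟩
    have hb₂ : x < (x + r) / 2 ∧ (x + r) / 2 < r := ⟨by linarith [hx.2], by linarith [hx.2]⟩
    have hmem₁ : min c ((l + x) / 2) ∈ Ioo l r :=
      ⟨lt_min hlc hb₁.1, lt_of_le_of_lt (min_le_left _ _) hcr⟩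
    have hmem₂ : max c ((x + r) / 2) ∈ Ioo l r :=
      ⟨lt_of_lt_of_le hlc (le_max_left _ _), max_lt hcr hb₂.2⟩
    apply ContinuousWithinAt.continuousAt _ (Icc_mem_nhds hb₁.2 hb₂.1)
    exact intervalIntegral.continuousWithinAt_primitive (measure_singleton x)
      (hβint _ hmem₁ _ hmem₂)
  have hFco : ContinuousOn F (Ioo l r) := fun x hx => (hFcont x hx).continuousWithinAt
  have hgco : ContinuousOn g (Ioo l r) := Real.continuous_exp.comp_continuousOn hFco
  -- derivative of s
  have hsd : ∀ x ∈ Ioo l r, HasDerivAt s (g x) x := by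
    intro x hx
    have hguIcc : IntervalIntegrable g volume c x := by
      apply ContinuousOn.intervalIntegrable
      apply hgco.mono
      rw [uIcc]
      exact Icc_subset_Ioo (lt_min hlc hx.1) (max_lt hcr hx.2)
    have hP : HasDerivAt (fun y => ∫ t in c..y, g t) (g x) x :=
      intervalIntegral.integral_hasDerivAt_right hguIcc
        (ContinuousOn.stronglyMeasurableAtFilter isOpen_Ioo hgco x hx)
        (Real.continuous_exp.continuousAt.comp (hFcont x hx))
    apply hP.congr_of_eventuallyEq
    filter_upwards [Ioo_mem_nhds hx.1 hx.2] with y hy using hs y hy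
  -- strict monotonicity of s
  have hmono : StrictMonoOn s (Ioo l r) := by
    apply strictMonoOn_of_deriv_pos (convex_Ioo l r)
    · exact fun x hx => (hsd x hx).continuousAt.continuousWithinAt
    · intro x hx
      rw [interior_Ioo] at hx
      rw [(hsd x hx).deriv]
      exact Real.exp_pos _
  -- master local structure lemma
  have hmaster : ∀ x₀ ∈ Ioo l r, ∀ ε > 0, ∃ V ∈ 𝓝 (s x₀), ∀ y ∈ V,
      y ∈ s '' Ioo l r ∧ q y ∈ Ioo l r ∧ |q y - x₀| < ε ∧ s (q y) = y := by
    intro x₀ hx₀ ε hε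
    obtain ⟨hx₀l, hx₀r⟩ := hx₀
    set δ := min ε (min (x₀ - l) (r - x₀)) / 2 with hδdef
    have hδ0 : 0 < δ :=
      div_pos (lt_min hε (lt_min (by linarith) (by linarith))) two_pos
    have hd1 := min_le_left ε (min (x₀ - l) (r - x₀))
    have hd2 := min_le_right ε (min (x₀ - l) (r - x₀))
    have hd3 := min_le_left (x₀ - l) (r - x₀)
    have hd4 := min_le_right (x₀ - l) (r - x₀)
    have hδε : δ < ε := by rw [hδdef]; linarith
    have hIcc : Icc (x₀ - δ) (x₀ + δ) ⊆ Ioo l r := by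
      intro y hy
      obtain ⟨hy1, hy2⟩ := hy
      constructor
      · rw [hδdef] at hy1; linarith
      · rw [hδdef] at hy2; linarith
    have hsub : Ioo (x₀ - δ) (x₀ + δ) ⊆ Ioo l r := Ioo_subset_Icc_self.trans hIcc
    have hm1 : x₀ - δ ∈ Ioo l r := hIcc ⟨le_rfl, by linarith⟩
    have hm2 : x₀ + δ ∈ Ioo l r := hIcc ⟨by linarith, le_rfl⟩
    have hx₀m : x₀ ∈ Ioo l r := ⟨hx₀l, hx₀r⟩
    have hlt1 : s (x₀ - δ) < s x₀ := hmono hm1 hx₀m (by linarith)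
    have hlt2 : s x₀ < s (x₀ + δ) := hmono hx₀m hm2 (by linarith)
    refine ⟨Ioo (s (x₀ - δ)) (s (x₀ + δ)), Ioo_mem_nhds hlt1 hlt2, ?_⟩
    intro y hy
    have hIVT : Ioo (s (x₀ - δ)) (s (x₀ + δ)) ⊆ s '' Ioo (x₀ - δ) (x₀ + δ) :=
      intermediate_value_Ioo (by linarith)
        (fun x hx => (hsd x (hIcc hx)).continuousAt.continuousWithinAt)
    obtain ⟨x', hx', hsx'⟩ := hIVT hy
    have hx'Ioo : x' ∈ Ioo l r := hsub hx'
    have hqy : q y = x' := by rw [← hsx', hq x' hx'Ioo]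
    refine ⟨⟨x', hx'Ioo, hsx'⟩, hqy ▸ hx'Ioo, ?_, by rw [hqy, hsx']⟩
    rw [hqy, abs_lt]
    exact ⟨by linarith [hx'.1], by linarith [hx'.2]⟩
  -- openness of the image
  have himg_open : IsOpen (s '' Ioo l r) := by
    rw [isOpen_iff_mem_nhds]
    rintro u ⟨x₀, hx₀, rfl⟩
    obtain ⟨V, hV, hVp⟩ := hmaster x₀ hx₀ 1 one_pos
    exact Filter.mem_of_superset hV fun y hy => (hVp y hy).1
  have hqmem : ∀ u ∈ s '' Ioo l r, q u ∈ Ioo l r ∧ s (q u) = u := by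
    rintro u ⟨x₀, hx₀, rfl⟩
    rw [hq x₀ hx₀]
    exact ⟨hx₀, rfl⟩
  have hqcont : ∀ u ∈ s '' Ioo l r, ContinuousAt q u := by
    rintro u ⟨x₀, hx₀, rfl⟩
    rw [ContinuousAt, hq x₀ hx₀, Metric.tendsto_nhds]
    intro ε hε
    obtain ⟨V, hV, hVp⟩ := hmaster x₀ hx₀ ε hε
    filter_upwards [hV] with y hy
    rw [Real.dist_eq]
    exact (hVp y hy).2.2.1
  have hsq_ev : ∀ u ∈ s '' Ioo l r, ∀ᶠ y in 𝓝 u, s (q y) = y := by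
    rintro u ⟨x₀, hx₀, rfl⟩
    obtain ⟨V, hV, hVp⟩ := hmaster x₀ hx₀ 1 one_pos
    filter_upwards [hV] with y hy using (hVp y hy).2.2.2
  -- derivative of q
  have hqd : ∀ u ∈ s '' Ioo l r, HasDerivAt q (g (q u))⁻¹ u := fun u hu =>
    HasDerivAt.of_local_left_inverse (hqcont u hu) (hsd (q u) (hqmem u hu).1)
      (Real.exp_ne_zero _) (hsq_ev u hu)
  have hqderiv : ∀ u ∈ s '' Ioo l r, deriv q u = (g (q u))⁻¹ := fun u hu => (hqd u hu).deriv
  -- measurable monotone inverse extension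
  set Q : ℝ → ℝ := fun u => sSup ({l} ∪ {x | x ∈ Ioo l r ∧ s x ≤ u}) with hQdef
  have hQbdd : ∀ u : ℝ, BddAbove ({l} ∪ {x | x ∈ Ioo l r ∧ s x ≤ u}) := by
    intro u
    refine ⟨r, ?_⟩
    rintro y (hy | hy)
    · rw [mem_singleton_iff] at hy; rw [hy]; exact hlr.le
    · exact hy.1.2.le
  have hQs : ∀ x ∈ Ioo l r, Q (s x) = x := by
    intro x hx
    apply IsGreatest.csSup_eq
    constructor
    · exact Or.inr ⟨hx, le_rfl⟩
    · rintro y (hy | hy)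
      · rw [mem_singleton_iff] at hy; rw [hy]; exact hx.1.le
      · by_contra hxy
        push_neg at hxy
        exact (hmono hx hy.1 hxy).not_ge hy.2
  have hQmono : Monotone Q := by
    intro u v huv
    apply csSup_le_csSup (hQbdd v) ⟨l, Or.inl rfl⟩
    rintro y (hy | hy)
    · exact Or.inl hy
    · exact Or.inr ⟨hy.1, hy.2.trans huv⟩
  have hQmeas : Measurable Q := hQmono.measurable
  have hqco : ContinuousOn q (s '' Ioo l r) := fun u hu => (hqcont u hu).continuousWithinAt
  refine ⟨deriv q, ?_, ?_, ?_⟩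
  · -- continuity of q' on the image
    apply ContinuousOn.congr (f := fun u => (g (q u))⁻¹)
    · apply ContinuousOn.inv₀
      · exact hgco.comp hqco fun u hu => (hqmem u hu).1
      · exact fun u _ => Real.exp_ne_zero _
    · exact fun u hu => hqderiv u hu
  · -- pointwise facts
    intro u hu
    refine ⟨hqderiv u hu ▸ hqd u hu, ?_, ?_⟩
    · rw [hqderiv u hu]
      positivity
    · rw [hqderiv u hu, one_div]
  · -- the second derivative
    refine ⟨fun w => -β (Q w) * (deriv q w) ^ 2, ?_, ?_, ?_⟩
    · exact ((hβ.comp hQmeas).neg).mul ((measurable_deriv q).pow_const 2)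
    · intro u v hu hv huv
      obtain ⟨hqu, hsqu⟩ := hqmem u hu
      obtain ⟨hqv, hsqv⟩ := hqmem v hv
      set a := q u with hadef
      set b := q v with hbdef
      have hab : a ≤ b := by
        by_contra hba
        push_neg at hba
        have h1 := hmono hqv hqu hba
        rw [hsqu, hsqv] at h1
        exact absurd huv (not_le.mpr h1)
      have hIccab : Icc a b ⊆ Ioo l r := fun x hx =>
        ⟨lt_of_lt_of_le hqu.1 hx.1, lt_of_le_of_lt hx.2 hqv.2⟩
      have himg : s '' Ioc a b = Ioc u v := by
        apply Subset.antisymm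
        · rintro _ ⟨x, hx, rfl⟩
          constructor
          · rw [← hsqu]
            exact hmono hqu (hIccab ⟨hx.1.le, hx.2⟩) hx.1
          · rw [← hsqv]
            rcases eq_or_lt_of_le hx.2 with h | h
            · rw [h]
            · exact (hmono (hIccab ⟨hx.1.le, hx.2⟩) hqv h).le
        · have h2 := intermediate_value_Ioc hab
            (fun x hx => (hsd x (hIccab hx)).continuousAt.continuousWithinAt)
          rw [hsqu, hsqv] at h2
          exact h2
      have hder : ∀ x ∈ Ioc a b, HasDerivWithinAt s (g x) (Ioc a b) x :=
        fun x hx => (hsd x (hIccab ⟨hx.1.le, hx.2⟩)).hasDerivWithinAt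
      have hinj : InjOn s (Ioc a b) :=
        hmono.injOn.mono fun x hx => hIccab ⟨hx.1.le, hx.2⟩
      have hptw : ∀ x ∈ Ioc a b,
          |g x| • (-β (Q (s x)) * (deriv q (s x)) ^ 2) = -(β x * Real.exp (-(F x))) := by
        intro x hx
        have hxIoo : x ∈ Ioo l r := hIccab ⟨hx.1.le, hx.2⟩
        have h1 : Q (s x) = x := hQs x hxIoo
        have h2 : deriv q (s x) = (Real.exp (F x))⁻¹ := by
          have h3 := hqderiv (s x) ⟨x, hxIoo, rfl⟩
          rw [hq x hxIoo] at h3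
          exact h3
        rw [smul_eq_mul, h1, h2, abs_of_pos (Real.exp_pos (F x)), Real.exp_neg]
        have h4 : Real.exp (F x) ≠ 0 := Real.exp_ne_zero _
        field_simp
      have hβab : IntegrableOn β (Ioc a b) volume :=
        (intervalIntegrable_iff_integrableOn_Ioc_of_le hab).mp (hβint a hqu b hqv)
      obtain ⟨C, hC⟩ : ∃ C : ℝ, ∀ x ∈ Ioc a b, Real.exp (-(F x)) ≤ C := by
        obtain ⟨C, hC⟩ := isCompact_Icc.exists_bound_of_continuousOn
          (s := Icc a b) (f := fun x => Real.exp (-(F x)))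
          (Real.continuous_exp.comp_continuousOn (hFco.mono hIccab).neg)
        exact ⟨C, fun x hx => (le_abs_self _).trans
          ((Real.norm_eq_abs _ ▸ hC x (Ioc_subset_Icc_self hx)))⟩
      have hmeas_exp : AEMeasurable (fun x => Real.exp (-(F x)))
          (volume.restrict (Ioc a b)) :=
        ContinuousOn.aemeasurable
          (Real.continuous_exp.comp_continuousOn
            ((hFco.mono (Ioc_subset_Icc_self.trans hIccab)).neg)) measurableSet_Ioc
      have hrhs_int : IntegrableOn (fun x => -(β x * Real.exp (-(F x)))) (Ioc a b) volume := by
        apply Integrable.mono' (hβab.abs.mul_const C)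
        · exact ((hβ.aemeasurable.restrict.mul hmeas_exp).neg).aestronglyMeasurable
        · filter_upwards [ae_restrict_mem measurableSet_Ioc] with x hx
          rw [norm_neg, norm_mul, Real.norm_eq_abs, Real.norm_eq_abs,
            abs_of_pos (Real.exp_pos _)]
          exact mul_le_mul_of_nonneg_left (hC x hx) (abs_nonneg _)
      constructor
      · rw [intervalIntegrable_iff_integrableOn_Ioc_of_le huv, ← himg,
          integrableOn_image_iff_integrableOn_abs_deriv_smul measurableSet_Ioc hder hinj]
        exact hrhs_int.congr_fun (fun x hx => (hptw x hx).symm) measurableSet_Ioc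
      · have h4 : ∫ w in u..v, -β (Q w) * (deriv q w) ^ 2
            = ∫ x in Ioc a b, |g x| • (-β (Q (s x)) * (deriv q (s x)) ^ 2) := by
          rw [intervalIntegral.integral_of_le huv, ← himg,
            integral_image_eq_integral_abs_deriv_smul measurableSet_Ioc hder hinj]
        have h5 : ∫ x in Ioc a b, |g x| • (-β (Q (s x)) * (deriv q (s x)) ^ 2)
            = ∫ x in Ioc a b, -(β x * Real.exp (-(F x))) :=
          setIntegral_congr_fun measurableSet_Ioc hptw
        have h6 : ∫ x in Ioc a b, -(β x * Real.exp (-(F x)))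
            = -(∫ x in Ioc a b, β x * Real.exp (-(F x))) := integral_neg _
        rw [h4, h5, h6, key3 β c a b hab (hβint c ⟨hlc, hcr⟩ a hqu) (hβint a hqu b hqv),
          hqderiv u hu, hqderiv v hv]
        rw [hgdef]
        simp only [← Real.exp_neg]
        ring
    · -- a.e. identity
      filter_upwards [ae_restrict_mem himg_open.measurableSet] with u hu
      obtain ⟨x, hx, rfl⟩ := hu
      rw [hQs x hx, hq x hx]
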